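/- Let U, V ⊂ ℝ² be open, let Y ∈ C²(U; ℝ³) satisfy (DY)ᵀDY = Id_{2×2} on U, and let j ∈ C²(V; ℝ²) with j(V) ⊂ U. Then for every x ∈ V the pointwise identity |D²(Y∘j)(x)|² = |D²Y(j(x)) : (Dj(x)⊗Dj(x))|² + |D²j(x)|² holds, where D²Y : (Dj⊗Dj) denotes the ℝ³-valued bilinear form (u,v) ↦ D²Y(j(x))[Dj(x)u, Dj(x)v] and |·| are the natural Frobenius-type norms on the spaces of bilinear maps. -/

import Mathlib

open MeasureTheory Metric Real Filter Matrix
open scoped ENNReal Topology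

noncomputable section

/-- The plane `ℝ²` with the Euclidean norm. -/
abbrev E2 : Type := EuclideanSpace ℝ (Fin 2)
/-- The space `ℝ³` with the Euclidean norm. -/
abbrev E3 : Type := EuclideanSpace ℝ (Fin 3)

/-- The `i`-th standard basis vector of `ℝ²`. -/
def e2 (i : Fin 2) : E2 := EuclideanSpace.single i 1

/-- Partial derivative in the direction of the `i`-th coordinate. -/
def pd (i : Fin 2) (f : E2 → ℝ) (x : E2) : ℝ := fderiv ℝ f x (e2 i)

/-- Hessian matrix of a scalar function on `ℝ²`. -/
def hess (f : E2 → ℝ) (x : E2) : Matrix (Fin 2) (Fin 2) ℝ :=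
  Matrix.of fun i j => pd i (pd j f) x

/-- Derivative matrix `Dy ∈ ℝ^{3×2}` of a map `y : ℝ² → ℝ³`. -/
def Dmat (y : E2 → E3) (x : E2) : Matrix (Fin 3) (Fin 2) ℝ :=
  Matrix.of fun i j => pd j (fun z => y z i) x

/-- Induced metric `g_y = (Dy)ᵀ Dy`. -/
def gmet (y : E2 → E3) (x : E2) : Matrix (Fin 2) (Fin 2) ℝ :=
  (Dmat y x)ᵀ * Dmat y x

/-- The rotated vector `x⊥ = (-x₂, x₁)`. -/
def perpVec (x : E2) : Fin 2 → ℝ := ![-(x 1), x 0]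

/-- The unit tangent `x̂⊥ = (-x₂, x₁)/|x|`. -/
def xperpUnit (x : E2) : Fin 2 → ℝ := fun i => perpVec x i / ‖x‖

/-- The reference (cone) metric `g_Δ = Id - Δ² x̂⊥ ⊗ x̂⊥`. -/
def gDelta (Δ : ℝ) (x : E2) : Matrix (Fin 2) (Fin 2) ℝ :=
  1 - Matrix.of fun i j => (Δ ^ 2 / ‖x‖ ^ 2) * perpVec x i * perpVec x j

/-- Squared Frobenius norm of a matrix. -/
def frob2 {m n : Type*} [Fintype m] [Fintype n] (A : Matrix m n ℝ) : ℝ :=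
  ∑ i, ∑ j, (A i j) ^ 2

/-- `|D²y|²`: the sum of the squared Frobenius norms of the Hessians of the components. -/
def hessNormSq (y : E2 → E3) (x : E2) : ℝ :=
  ∑ i : Fin 3, frob2 (hess (fun z => y z i) x)

/-- The free elastic energy `I_{h,Δ}(y)`. -/
def energy (h Δ : ℝ) (y : E2 → E3) : ℝ :=
  ∫ x in ball (0 : E2) 1, (frob2 (gmet y x - gDelta Δ x) + h ^ 2 * hessNormSq y x)

/-- The singular cone `y^Δ(x) = √(1-Δ²)·(x,0) + Δ|x| e₃`. -/
def coneMap (Δ : ℝ) (x : E2) : E3 :=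
  (WithLp.equiv 2 (Fin 3 → ℝ)).symm
    ![Real.sqrt (1 - Δ ^ 2) * x 0, Real.sqrt (1 - Δ ^ 2) * x 1, Δ * ‖x‖]


/-- Derivative matrix `Dj ∈ ℝ^{2×2}` of a map `j : ℝ² → ℝ²`. -/
def Dmat2 (j : E2 → E2) (x : E2) : Matrix (Fin 2) (Fin 2) ℝ :=
  Matrix.of fun a b => pd b (fun z => j z a) x

/-- `|D²j|²` for a map `j : ℝ² → ℝ²`. -/
def hessNormSq2 (j : E2 → E2) (x : E2) : ℝ :=
  ∑ i : Fin 2, frob2 (hess (fun z => j z i) x)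



lemma e2_decomp (v : E2) : v = ∑ c, v c • e2 c := by
  ext i
  simp only [e2, PiLp.ext_iff] at *
  simp [EuclideanSpace.single_apply, Finset.sum_apply]
  fin_cases i <;> simp

lemma fderiv_apply_sum (f : E2 → ℝ) (p : E2) (v : E2) :
    fderiv ℝ f p v = ∑ c, v c * pd c f p := by
  conv_lhs => rw [e2_decomp v]
  rw [map_sum]
  simp [pd]

lemma pd_coord2 (j : E2 → E2) (x : E2) (hj : DifferentiableAt ℝ j x) (c b : Fin 2) :
    pd b (fun z => j z c) x = fderiv ℝ j x (e2 b) c := by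
  have h : HasFDerivAt (fun z => j z c)
      ((EuclideanSpace.proj c : E2 →L[ℝ] ℝ).comp (fderiv ℝ j x)) x :=
    (EuclideanSpace.proj c : E2 →L[ℝ] ℝ).hasFDerivAt.comp x hj.hasFDerivAt
  simp [pd, h.fderiv]

lemma pd_comp (f : E2 → ℝ) (j : E2 → E2) (x : E2)
    (hf : DifferentiableAt ℝ f (j x)) (hj : DifferentiableAt ℝ j x) (b : Fin 2) :
    pd b (fun z => f (j z)) x = ∑ c, pd b (fun z => j z c) x * pd c f (j x) := by
  have h : fderiv ℝ (f ∘ j) x = (fderiv ℝ f (j x)).comp (fderiv ℝ j x) :=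
    fderiv_comp x hf hj
  have h2 : pd b (fun z => f (j z)) x = fderiv ℝ f (j x) (fderiv ℝ j x (e2 b)) := by
    show fderiv ℝ (f ∘ j) x (e2 b) = _
    rw [h]; rfl
  rw [h2, fderiv_apply_sum]
  exact Finset.sum_congr rfl fun c _ => by rw [pd_coord2 j x hj]

lemma pd_sum_mul {n : ℕ} (f g : Fin n → E2 → ℝ) (x : E2)
    (hf : ∀ c, DifferentiableAt ℝ (f c) x) (hg : ∀ c, DifferentiableAt ℝ (g c) x) (a : Fin 2) :
    pd a (fun z => ∑ c, f c z * g c z) x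
      = ∑ c, (pd a (f c) x * g c x + f c x * pd a (g c) x) := by
  have h : HasFDerivAt (fun z => ∑ c, f c z * g c z)
      (∑ c, (f c x • fderiv ℝ (g c) x + g c x • fderiv ℝ (f c) x)) x := by
    apply HasFDerivAt.fun_sum
    intro c _
    exact (hf c).hasFDerivAt.mul (hg c).hasFDerivAt
  have := h.fderiv
  simp only [pd, this, ContinuousLinearMap.sum_apply, ContinuousLinearMap.add_apply,
    ContinuousLinearMap.smul_apply, smul_eq_mul]
  exact Finset.sum_congr rfl fun c _ => by ring

lemma differentiableAt_pd (f : E2 → ℝ) (q : E2) (hf : ContDiffAt ℝ 2 f q) (c : Fin 2) :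
    DifferentiableAt ℝ (pd c f) q := by
  have h1 : ContDiffAt ℝ 1 (fderiv ℝ f) q := hf.fderiv_right (le_refl _)
  have h2 : DifferentiableAt ℝ (fderiv ℝ f) q := h1.differentiableAt one_ne_zero
  exact h2.clm_apply (differentiableAt_const _)

lemma pd_pd_eq_sndFDeriv (f : E2 → ℝ) (q : E2) (hf : ContDiffAt ℝ 2 f q) (a b : Fin 2) :
    pd a (pd b f) q = fderiv ℝ (fderiv ℝ f) q (e2 a) (e2 b) := by
  have h2 : DifferentiableAt ℝ (fderiv ℝ f) q :=
    ((hf.fderiv_right (le_refl _) : ContDiffAt ℝ 1 (fderiv ℝ f) q)).differentiableAt one_ne_zero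
  have h : HasFDerivAt (fun z => (ContinuousLinearMap.apply ℝ ℝ (e2 b)) (fderiv ℝ f z))
      ((ContinuousLinearMap.apply ℝ ℝ (e2 b)).comp (fderiv ℝ (fderiv ℝ f) q)) q :=
    (ContinuousLinearMap.apply ℝ ℝ (e2 b)).hasFDerivAt.comp q h2.hasFDerivAt
  have he : pd b f = fun z => (ContinuousLinearMap.apply ℝ ℝ (e2 b)) (fderiv ℝ f z) := rfl
  rw [show pd a (pd b f) q = fderiv ℝ (pd b f) q (e2 a) from rfl, he, h.fderiv]
  rfl

lemma pd_pd_symm (f : E2 → ℝ) (q : E2) (hf : ContDiffAt ℝ 2 f q) (a b : Fin 2) :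
    pd a (pd b f) q = pd b (pd a f) q := by
  rw [pd_pd_eq_sndFDeriv f q hf a b, pd_pd_eq_sndFDeriv f q hf b a]
  exact hf.isSymmSndFDerivAt (by simp) (e2 a) (e2 b)

lemma sum_sq_of_ortho {ι κ : Type*} [Fintype ι] [Fintype κ] [DecidableEq κ] (u : κ → ι → ℝ) (v : κ → ℝ)
    (hu : ∀ c c', ∑ i, u c i * u c' i = if c = c' then 1 else 0) :
    ∑ i, (∑ c, u c i * v c)^2 = ∑ c, (v c)^2 := by
  have h1 : ∀ i, (∑ c, u c i * v c)^2 = ∑ c, ∑ c', (u c i * v c) * (u c' i * v c') := by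
    intro i; rw [sq, Finset.sum_mul_sum]
  calc ∑ i, (∑ c, u c i * v c)^2
      = ∑ i, ∑ c, ∑ c', (u c i * v c) * (u c' i * v c') := by
        exact Finset.sum_congr rfl fun i _ => h1 i
    _ = ∑ c, ∑ c', (v c * v c') * ∑ i, u c i * u c' i := by
        rw [Finset.sum_comm]
        refine Finset.sum_congr rfl fun c _ => ?_
        rw [Finset.sum_comm]
        refine Finset.sum_congr rfl fun c' _ => ?_
        rw [Finset.mul_sum]
        exact Finset.sum_congr rfl fun i _ => by ring
    _ = ∑ c, (v c)^2 := by
        refine Finset.sum_congr rfl fun c _ => ?_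
        simp_rw [hu]
        have h2 : ∀ c', (v c * v c') * (if c = c' then 1 else 0)
            = if c = c' then v c * v c' else 0 := by
          intro c'; split <;> simp
        simp_rw [h2]
        rw [Finset.sum_ite_eq]
        simp [sq]

lemma sum_mul_ortho {ι M K : Type*} [Fintype ι] [Fintype M] [Fintype K]
    (P : M → ι → ℝ) (Q : K → ι → ℝ) (α : M → ℝ) (β : K → ℝ)
    (h : ∀ m k, ∑ i, P m i * Q k i = 0) :
    ∑ i, (∑ m, α m * P m i) * (∑ k, β k * Q k i) = 0 := by
  have h1 : ∀ i, (∑ m, α m * P m i) * (∑ k, β k * Q k i)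
      = ∑ m, ∑ k, (α m * β k) * (P m i * Q k i) := by
    intro i
    rw [Finset.sum_mul_sum]
    exact Finset.sum_congr rfl fun m _ => Finset.sum_congr rfl fun k _ => by ring
  calc ∑ i, (∑ m, α m * P m i) * (∑ k, β k * Q k i)
      = ∑ m, ∑ k, (α m * β k) * ∑ i, P m i * Q k i := by
        rw [show (∑ i, (∑ m, α m * P m i) * (∑ k, β k * Q k i))
            = ∑ i, ∑ m, ∑ k, (α m * β k) * (P m i * Q k i) from
          Finset.sum_congr rfl fun i _ => h1 i]
        rw [Finset.sum_comm]
        refine Finset.sum_congr rfl fun m _ => ?_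
        rw [Finset.sum_comm]
        refine Finset.sum_congr rfl fun k _ => ?_
        rw [Finset.mul_sum]
    _ = 0 := by simp [h]

lemma braid {D : Fin 2 → Fin 3 → ℝ} {H : Fin 3 → Fin 2 → Fin 2 → ℝ}
    (hsym : ∀ i a b, H i a b = H i b a)
    (hanti : ∀ c d e, (∑ i, D d i * H i c e) + (∑ i, D e i * H i c d) = 0) :
    ∀ a b c, ∑ i, D a i * H i b c = 0 := by
  have hs : ∀ a b c, (∑ i, D a i * H i b c) = ∑ i, D a i * H i c b :=
    fun a b c => Finset.sum_congr rfl fun i _ => by rw [hsym]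
  have ha : ∀ a b c, (∑ i, D a i * H i b c) = -∑ i, D c i * H i b a := by
    intro a b c
    have := hanti b a c
    linarith
  intro a b c
  have key : (∑ i, D a i * H i b c) = -(∑ i, D a i * H i b c) := by
    calc ∑ i, D a i * H i b c = ∑ i, D a i * H i c b := hs _ _ _
    _ = -∑ i, D b i * H i c a := ha _ _ _
    _ = -∑ i, D b i * H i a c := by rw [hs b c a]
    _ = ∑ i, D c i * H i a b := by
        have := ha b a c
        linarith
    _ = ∑ i, D c i * H i b a := hs _ _ _
    _ = -∑ i, D a i * H i b c := ha c b a
  linarith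

lemma alg (A B : Fin 3 → ℝ) (Hj : Fin 2 → ℝ) (hAB : ∑ i, A i * B i = 0)
    (hB : ∑ i, (B i)^2 = ∑ c, (Hj c)^2) :
    ∑ i, (A i + B i)^2 = (∑ i, (A i)^2) + ∑ c, (Hj c)^2 := by
  have h : ∑ i, (A i + B i)^2 = ∑ i, ((A i)^2 + 2*(A i * B i) + (B i)^2) :=
    Finset.sum_congr rfl fun i _ => by ring
  rw [h, Finset.sum_add_distrib, Finset.sum_add_distrib, ← Finset.mul_sum, hAB, hB]
  ring


lemma contDiffAt_comp3 (U : Set E2) (hU : IsOpen U) (Y : E2 → E3)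
    (hY : ContDiffOn ℝ 2 Y U) (q : E2) (hq : q ∈ U) (i : Fin 3) :
    ContDiffAt ℝ 2 (fun z => Y z i) q :=
  ((EuclideanSpace.proj i : E3 →L[ℝ] ℝ).contDiff.contDiffAt).comp q
    (hY.contDiffAt (hU.mem_nhds hq))

lemma contDiffAt_comp2 (V : Set E2) (hV : IsOpen V) (j : E2 → E2)
    (hj : ContDiffOn ℝ 2 j V) (z : E2) (hz : z ∈ V) (c : Fin 2) :
    ContDiffAt ℝ 2 (fun w => j w c) z :=
  ((EuclideanSpace.proj c : E2 →L[ℝ] ℝ).contDiff.contDiffAt).comp z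
    (hj.contDiffAt (hV.mem_nhds hz))

lemma hess_comp (U V : Set E2) (hU : IsOpen U) (hV : IsOpen V)
    (Y : E2 → E3) (hY : ContDiffOn ℝ 2 Y U)
    (j : E2 → E2) (hj : ContDiffOn ℝ 2 j V) (hmaps : Set.MapsTo j V U)
    (x : E2) (hx : x ∈ V) (i : Fin 3) (a b : Fin 2) :
    pd a (pd b (fun z => Y (j z) i)) x
      = (∑ c, ∑ d, pd a (fun z => j z d) x * pd d (pd c (fun z => Y z i)) (j x)
            * pd b (fun z => j z c) x)
        + ∑ c, pd c (fun z => Y z i) (j x) * pd a (pd b (fun z => j z c)) x := by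
  have hjd : ∀ z ∈ V, DifferentiableAt ℝ j z := fun z hz =>
    (hj.contDiffAt (hV.mem_nhds hz)).differentiableAt two_ne_zero
  have hev : (fun z => pd b (fun w => Y (j w) i) z)
      =ᶠ[𝓝 x] (fun z => ∑ c, pd b (fun w => j w c) z * pd c (fun w => Y w i) (j z)) := by
    filter_upwards [hV.mem_nhds hx] with z hz
    exact pd_comp (fun w => Y w i) j z
      ((contDiffAt_comp3 U hU Y hY (j z) (hmaps hz) i).differentiableAt two_ne_zero)
      (hjd z hz) b
  have h1 : pd a (pd b (fun z => Y (j z) i)) x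
      = pd a (fun z => ∑ c, pd b (fun w => j w c) z * pd c (fun w => Y w i) (j z)) x := by
    show fderiv ℝ _ x (e2 a) = fderiv ℝ _ x (e2 a)
    rw [hev.fderiv_eq]
  rw [h1]
  have h2 := pd_sum_mul (fun c z => pd b (fun w => j w c) z)
    (fun c z => pd c (fun w => Y w i) (j z)) x
    (fun c => differentiableAt_pd (fun w => j w c) x (contDiffAt_comp2 V hV j hj x hx c) b)
    (fun c => (differentiableAt_pd (fun w => Y w i) (j x)
      (contDiffAt_comp3 U hU Y hY (j x) (hmaps hx) i) c).comp x (hjd x hx)) a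
  rw [h2]
  have h3 : ∀ c : Fin 2, pd a (fun z => pd c (fun w => Y w i) (j z)) x
      = ∑ d, pd a (fun z => j z d) x * pd d (pd c (fun w => Y w i)) (j x) := by
    intro c
    have := pd_comp (pd c (fun w => Y w i)) j x
      (differentiableAt_pd (fun w => Y w i) (j x)
        (contDiffAt_comp3 U hU Y hY (j x) (hmaps hx) i) c) (hjd x hx) a
    rw [this]
  rw [Finset.sum_add_distrib, add_comm]
  congr 1
  · refine Finset.sum_congr rfl fun c _ => ?_
    rw [h3 c, Finset.mul_sum]
    refine Finset.sum_congr rfl fun d _ => ?_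
    show pd b (fun w => j w c) x * (pd a (fun z => j z d) x * pd d (pd c (fun w => Y w i)) (j x))
      = pd a (fun z => j z d) x * pd d (pd c (fun w => Y w i)) (j x) * pd b (fun w => j w c) x
    ring
  · refine Finset.sum_congr rfl fun c _ => ?_
    show pd a (pd b (fun w => j w c)) x * pd c (fun w => Y w i) (j x)
      = pd c (fun w => Y w i) (j x) * pd a (pd b (fun w => j w c)) x
    ring

lemma metric_entry (U : Set E2) (Y : E2 → E3) (hiso : ∀ x ∈ U, gmet Y x = 1)
    (q : E2) (hq : q ∈ U) (d e : Fin 2) :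
    (∑ i, pd d (fun z => Y z i) q * pd e (fun z => Y z i) q)
      = if d = e then (1 : ℝ) else 0 := by
  have h1 : gmet Y q d e = (1 : Matrix (Fin 2) (Fin 2) ℝ) d e := by rw [hiso q hq]
  rw [Matrix.one_apply] at h1
  rw [← h1]
  simp [gmet, Matrix.mul_apply, Dmat, Matrix.transpose_apply]

lemma Tanti_lemma (U : Set E2) (hU : IsOpen U) (Y : E2 → E3)
    (hY : ContDiffOn ℝ 2 Y U) (hiso : ∀ x ∈ U, gmet Y x = 1)
    (p : E2) (hp : p ∈ U) (c d e : Fin 2) :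
    (∑ i : Fin 3, pd d (fun z => Y z i) p * pd c (pd e (fun z => Y z i)) p)
      + (∑ i : Fin 3, pd e (fun z => Y z i) p * pd c (pd d (fun z => Y z i)) p) = 0 := by
  have hev : (fun z => ∑ i : Fin 3, pd d (fun w => Y w i) z * pd e (fun w => Y w i) z)
      =ᶠ[𝓝 p] (fun _ => if d = e then (1 : ℝ) else 0) := by
    filter_upwards [hU.mem_nhds hp] with q hq
    exact metric_entry U Y hiso q hq d e
  have h0 : pd c (fun z => ∑ i : Fin 3, pd d (fun w => Y w i) z * pd e (fun w => Y w i) z) p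
      = 0 := by
    show fderiv ℝ _ p (e2 c) = 0
    rw [hev.fderiv_eq, fderiv_fun_const]
    rfl
  rw [pd_sum_mul (fun i z => pd d (fun w => Y w i) z) (fun i z => pd e (fun w => Y w i) z) p
    (fun i => differentiableAt_pd (fun w => Y w i) p (contDiffAt_comp3 U hU Y hY p hp i) d)
    (fun i => differentiableAt_pd (fun w => Y w i) p (contDiffAt_comp3 U hU Y hY p hp i) e)
    c] at h0
  rw [← h0, Finset.sum_add_distrib, add_comm]
  congr 1
  · refine Finset.sum_congr rfl fun i _ => ?_
    show pd e (fun w => Y w i) p * pd c (pd d (fun w => Y w i)) p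
      = pd c (pd d (fun w => Y w i)) p * pd e (fun w => Y w i) p
    ring

lemma Tzero_lemma (U : Set E2) (hU : IsOpen U) (Y : E2 → E3)
    (hY : ContDiffOn ℝ 2 Y U) (hiso : ∀ x ∈ U, gmet Y x = 1)
    (p : E2) (hp : p ∈ U) (a b c : Fin 2) :
    ∑ i : Fin 3, pd a (fun z => Y z i) p * pd b (pd c (fun z => Y z i)) p = 0 := by
  refine braid (D := fun a i => pd a (fun z => Y z i) p)
    (H := fun i b c => pd b (pd c (fun z => Y z i)) p) ?_ ?_ a b c
  · intro i a b
    exact pd_pd_symm (fun z => Y z i) p (contDiffAt_comp3 U hU Y hY p hp i) a b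
  · intro c d e
    exact Tanti_lemma U hU Y hY hiso p hp c d e

lemma triple_entry (D H : Matrix (Fin 2) (Fin 2) ℝ) (a b : Fin 2) :
    (Dᵀ * H * D) a b = ∑ c, ∑ d, D d a * H d c * D c b := by
  rw [Matrix.mul_apply]
  refine Finset.sum_congr rfl fun c _ => ?_
  rw [Matrix.mul_apply, Finset.sum_mul]
  refine Finset.sum_congr rfl fun d _ => ?_
  rw [Matrix.transpose_apply]

lemma keyab_lemma (U : Set E2) (hU : IsOpen U) (Y : E2 → E3)
    (hY : ContDiffOn ℝ 2 Y U) (hiso : ∀ x ∈ U, gmet Y x = 1)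
    (p : E2) (hp : p ∈ U)
    (Dj : Fin 2 → Fin 2 → ℝ) (Hj : Fin 2 → Fin 2 → Fin 2 → ℝ) (a b : Fin 2) :
    ∑ i : Fin 3, ((∑ c, ∑ d, Dj d a * pd d (pd c (fun z => Y z i)) p * Dj c b)
        + ∑ c, pd c (fun z => Y z i) p * Hj c a b)^2
      = (∑ i : Fin 3, (∑ c, ∑ d, Dj d a * pd d (pd c (fun z => Y z i)) p * Dj c b)^2)
        + ∑ c : Fin 2, (Hj c a b)^2 := by
  apply alg
  · -- cross term vanishes
    have hA : ∀ i : Fin 3, (∑ c, ∑ d, Dj d a * pd d (pd c (fun z => Y z i)) p * Dj c b)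
        = ∑ m : Fin 2 × Fin 2, (Dj m.1 a * Dj m.2 b)
            * pd m.1 (pd m.2 (fun z => Y z i)) p := by
      intro i
      rw [Fintype.sum_prod_type, Finset.sum_comm]
      exact Finset.sum_congr rfl fun c _ => Finset.sum_congr rfl fun d _ => by ring
    calc ∑ i : Fin 3, (∑ c, ∑ d, Dj d a * pd d (pd c (fun z => Y z i)) p * Dj c b)
          * (∑ c, pd c (fun z => Y z i) p * Hj c a b)
        = ∑ i : Fin 3, (∑ m : Fin 2 × Fin 2,
              (Dj m.1 a * Dj m.2 b) * pd m.1 (pd m.2 (fun z => Y z i)) p)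
            * (∑ c, Hj c a b * pd c (fun z => Y z i) p) := by
          refine Finset.sum_congr rfl fun i _ => ?_
          rw [hA i]
          congr 1
          exact Finset.sum_congr rfl fun c _ => by ring
      _ = 0 := by
          refine sum_mul_ortho (ι := Fin 3) (M := Fin 2 × Fin 2) (K := Fin 2)
            (fun m i => pd m.1 (pd m.2 (fun z => Y z i)) p)
            (fun c i => pd c (fun z => Y z i) p)
            (fun m => Dj m.1 a * Dj m.2 b) (fun c => Hj c a b) ?_
          intro m k
          rw [show (∑ i : Fin 3, pd m.1 (pd m.2 (fun z => Y z i)) p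
                * pd k (fun z => Y z i) p)
              = ∑ i : Fin 3, pd k (fun z => Y z i) p
                * pd m.1 (pd m.2 (fun z => Y z i)) p from
            Finset.sum_congr rfl fun i _ => mul_comm _ _]
          exact Tzero_lemma U hU Y hY hiso p hp k m.1 m.2
  · exact sum_sq_of_ortho (fun c i => pd c (fun z => Y z i) p) (fun c => Hj c a b)
      (fun c c' => metric_entry U Y hiso p hp c c')

/-- pointwise Pythagoras identity for the second derivative of the
composition of an isometric immersion with a reparametrization. -/
theorem stmt_17 (U V : Set E2) (hU : IsOpen U) (hV : IsOpen V)
    (Y : E2 → E3) (hY : ContDiffOn ℝ 2 Y U)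
    (hiso : ∀ x ∈ U, gmet Y x = 1)
    (j : E2 → E2) (hj : ContDiffOn ℝ 2 j V) (hmaps : Set.MapsTo j V U) :
    ∀ x ∈ V,
      hessNormSq (fun z => Y (j z)) x
        = (∑ i : Fin 3,
            frob2 ((Dmat2 j x)ᵀ * hess (fun z => Y z i) (j x) * Dmat2 j x))
          + hessNormSq2 j x := by
  intro x hx
  have hp : j x ∈ U := hmaps hx
  have lhs_eq : hessNormSq (fun z => Y (j z)) x
      = ∑ a : Fin 2, ∑ b : Fin 2, ∑ i : Fin 3,
          ((∑ c, ∑ d, pd a (fun z => j z d) x * pd d (pd c (fun z => Y z i)) (j x)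
              * pd b (fun z => j z c) x)
            + ∑ c, pd c (fun z => Y z i) (j x) * pd a (pd b (fun z => j z c)) x)^2 := by
    simp only [hessNormSq, frob2, hess, Matrix.of_apply]
    rw [Finset.sum_comm]
    refine Finset.sum_congr rfl fun a _ => ?_
    rw [Finset.sum_comm]
    refine Finset.sum_congr rfl fun b _ => ?_
    refine Finset.sum_congr rfl fun i _ => ?_
    rw [hess_comp U V hU hV Y hY j hj hmaps x hx i a b]
  have rhs1_eq : (∑ i : Fin 3,
        frob2 ((Dmat2 j x)ᵀ * hess (fun z => Y z i) (j x) * Dmat2 j x))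
      = ∑ a : Fin 2, ∑ b : Fin 2, ∑ i : Fin 3,
          (∑ c, ∑ d, pd a (fun z => j z d) x * pd d (pd c (fun z => Y z i)) (j x)
              * pd b (fun z => j z c) x)^2 := by
    simp only [frob2]
    rw [Finset.sum_comm]
    refine Finset.sum_congr rfl fun a _ => ?_
    rw [Finset.sum_comm]
    refine Finset.sum_congr rfl fun b _ => ?_
    refine Finset.sum_congr rfl fun i _ => ?_
    rw [triple_entry]
    rfl
  have rhs2_eq : hessNormSq2 j x
      = ∑ a : Fin 2, ∑ b : Fin 2, ∑ c : Fin 2, (pd a (pd b (fun z => j z c)) x)^2 := by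
    simp only [hessNormSq2, frob2, hess, Matrix.of_apply]
    rw [Finset.sum_comm]
    exact Finset.sum_congr rfl fun a _ => Finset.sum_comm
  rw [lhs_eq, rhs1_eq, rhs2_eq, ← Finset.sum_add_distrib]
  refine Finset.sum_congr rfl fun a _ => ?_
  rw [← Finset.sum_add_distrib]
  exact Finset.sum_congr rfl fun b _ =>
    keyab_lemma U hU Y hY hiso (j x) hp
      (fun c b => pd b (fun z => j z c) x) (fun c a b => pd a (pd b (fun z => j z c)) x) a b
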